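/- The bijection between split graphs on n vertices and XY-graphs on n vertices with no isolates in Y (obtained from an S-max KS-partition by setting X = S, Y = K and deleting edges within K) maps unbalanced split graphs exactly to XY-graphs having a universal vertex in X, and balanced split graphs exactly to XY-graphs with no universal vertex in X. -/

import Mathlib

open SimpleGraph
attribute [local instance] Classical.propDecidable

variable {V : Type*} [Fintype V] [DecidableEq V]

/-- A set of vertices is stable (independent) if no two of its elements are adjacent. -/
def IsStableSet (G : SimpleGraph V) (s : Set V) : Prop :=
  s.Pairwise fun a b => ¬ G.Adj a b

/-- The clique number ω(G). -/
noncomputable def omegaNum (G : SimpleGraph V) : ℕ :=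
  Finset.univ.sup fun s : Finset V => if G.IsClique (s : Set V) then s.card else 0

/-- The independence number α(G). -/
noncomputable def alphaNum (G : SimpleGraph V) : ℕ :=
  Finset.univ.sup fun s : Finset V => if IsStableSet G (s : Set V) then s.card else 0

/-- A KS-partition of `G`: a partition of the vertex set into a clique `K` and a stable set `S`. -/
def IsKSPartition (G : SimpleGraph V) (K S : Finset V) : Prop :=
  Disjoint K S ∧ K ∪ S = Finset.univ ∧ G.IsClique (K : Set V) ∧ IsStableSet G (S : Set V)

/-- `G` is a split graph. -/
def IsSplit (G : SimpleGraph V) : Prop := ∃ K S : Finset V, IsKSPartition G K S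

/-- A split graph is balanced if it has a KS-partition with `|K| = ω(G)` and `|S| = α(G)`. -/
def IsBalanced (G : SimpleGraph V) : Prop :=
  ∃ K S : Finset V, IsKSPartition G K S ∧ K.card = omegaNum G ∧ S.card = alphaNum G

/-- The bipartite graph obtained from a split graph with KS-partition `(K, S)` by
deleting all edges within `K`: only the edges between `S` and `K` remain. -/
def crossGraph (G : SimpleGraph V) (K S : Finset V) : SimpleGraph V where
  Adj u v := G.Adj u v ∧ ((u ∈ S ∧ v ∈ K) ∨ (u ∈ K ∧ v ∈ S))
  symm := by
    constructor
    intro u v h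
    exact ⟨h.1.symm, by tauto⟩
  loopless := ⟨fun v h => G.irrefl h.1⟩

/-- Under the bijection from split graphs to XY-graphs with no isolates in `Y`
(from an S-max KS-partition, with `X = S`, `Y = K`, deleting the edges within `K`),
a split graph is unbalanced iff the resulting XY-graph has a universal vertex in `X`,
and balanced iff it has no universal vertex in `X`. -/
lemma clique_card_le_omega (G : SimpleGraph V) {s : Finset V}
    (hs : G.IsClique (s : Set V)) : s.card ≤ omegaNum G := by
  have := Finset.le_sup (f := fun s : Finset V =>
    if G.IsClique (s : Set V) then s.card else 0) (Finset.mem_univ s)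
  simpa [hs, omegaNum] using this

theorem balance_correspondence_xy (G : SimpleGraph V) (K S : Finset V)
    (h : IsKSPartition G K S) (hS : S.card = alphaNum G) :
    (¬ IsBalanced G ↔ ∃ x ∈ S, ∀ y ∈ K, (crossGraph G K S).Adj x y) ∧
    (IsBalanced G ↔ ¬ ∃ x ∈ S, ∀ y ∈ K, (crossGraph G K S).Adj x y) := by
  obtain ⟨hdisj, huniv, hK, hSstab⟩ := h
  have hcard : K.card + S.card = Fintype.card V := by
    rw [← Finset.card_union_of_disjoint hdisj, huniv, Finset.card_univ]
  have key : (∃ x ∈ S, ∀ y ∈ K, (crossGraph G K S).Adj x y) → ¬ IsBalanced G := by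
    rintro ⟨x, hxS, hx⟩ ⟨K', S', ⟨hd', hu', hK', hS'⟩, hKc, hSc⟩
    have hxK : x ∉ K := fun hxK => (Finset.disjoint_left.mp hdisj hxK) hxS
    have hclique : G.IsClique ((insert x K : Finset V) : Set V) := by
      rw [Finset.coe_insert]
      apply hK.insert
      intro y hyK _
      exact (hx y hyK).1
    have h1 : K.card + 1 ≤ omegaNum G := by
      have := clique_card_le_omega G hclique
      rwa [Finset.card_insert_of_notMem hxK] at this
    have h2 : omegaNum G + alphaNum G = Fintype.card V := by
      rw [← hKc, ← hSc, ← Finset.card_union_of_disjoint hd', hu', Finset.card_univ]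
    omega
  have key2 : ¬ (∃ x ∈ S, ∀ y ∈ K, (crossGraph G K S).Adj x y) → IsBalanced G := by
    intro hno
    refine ⟨K, S, ⟨hdisj, huniv, hK, hSstab⟩, ?_, hS⟩
    have hub : omegaNum G ≤ K.card := by
      apply Finset.sup_le
      intro C _
      split_ifs with hC
      · by_cases hCS : ∃ x ∈ C, x ∈ S
        · obtain ⟨x, hxC, hxS⟩ := hCS
          push_neg at hno
          obtain ⟨y, hyK, hxy⟩ := hno x hxS
          have hxy' : ¬ G.Adj x y := fun hadj => hxy ⟨hadj, Or.inl ⟨hxS, hyK⟩⟩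
          have hxney : x ≠ y := fun e =>
            (Finset.disjoint_left.mp hdisj hyK) (e ▸ hxS)
          have hsub : C ⊆ insert x (K.erase y) := by
            intro z hzC
            by_cases hzx : z = x
            · simp [hzx]
            · have hzK : z ∈ K := by
                have hz : z ∈ K ∪ S := by rw [huniv]; exact Finset.mem_univ z
                rcases Finset.mem_union.mp hz with h' | h'
                · exact h'
                · exact absurd (hC (Finset.mem_coe.mpr hxC) (Finset.mem_coe.mpr hzC)
                    (Ne.symm hzx)) (hSstab (Finset.mem_coe.mpr hxS)
                    (Finset.mem_coe.mpr h') (Ne.symm hzx))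
              have hzy : z ≠ y := by
                intro e
                subst e
                exact hxy' (hC (Finset.mem_coe.mpr hxC) (Finset.mem_coe.mpr hzC)
                  (Ne.symm hzx))
              exact Finset.mem_insert_of_mem (Finset.mem_erase.mpr ⟨hzy, hzK⟩)
          have hKpos : 1 ≤ K.card := Finset.card_pos.mpr ⟨y, hyK⟩
          calc C.card ≤ (insert x (K.erase y)).card := Finset.card_le_card hsub
            _ ≤ (K.erase y).card + 1 := Finset.card_insert_le _ _
            _ = K.card := by rw [Finset.card_erase_of_mem hyK]; omega
        · push_neg at hCS
          apply Finset.card_le_card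
          intro z hzC
          have hz : z ∈ K ∪ S := by rw [huniv]; exact Finset.mem_univ z
          rcases Finset.mem_union.mp hz with h' | h'
          · exact h'
          · exact absurd h' (hCS z hzC)
      · exact Nat.zero_le _
    exact le_antisymm (clique_card_le_omega G hK) hub
  constructor
  · exact ⟨fun hnb => by_contra fun hne => hnb (key2 hne), key⟩
  · exact ⟨fun hb hex => key hex hb, key2⟩
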